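/- Let P1, P2 : J → (0,1) be functions on a finite index set J, and let (X(ω))_{ω∈J} be independent with X(ω) ~ Bernoulli(P1(ω)). Then P( Σ_{ω∈J} X(ω)·log(P2(ω)(1−P1(ω))/(P1(ω)(1−P2(ω)))) > Σ_{ω∈J} log((1−P1(ω))/(1−P2(ω))) ) ≤ exp(−I*/2), where I* = −2·Σ_{ω∈J} log(√(P1(ω)P2(ω)) + √((1−P1(ω))(1−P2(ω)))). -/

import Mathlib

open MeasureTheory Real ProbabilityTheory

private lemma exp_half_log {x : ℝ} (hx : 0 < x) :
    Real.exp (Real.log x / 2) = Real.sqrt x := by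
  rw [← Real.log_sqrt hx.le, Real.exp_log (Real.sqrt_pos.2 hx)]

private lemma per_omega {p q : ℝ} (hp : p ∈ Set.Ioo (0:ℝ) 1) (hq : q ∈ Set.Ioo (0:ℝ) 1) :
    Real.exp (-(1/2) * Real.log ((1 - p) / (1 - q)))
      * (p * Real.exp (Real.log (q * (1 - p) / (p * (1 - q))) / 2) + (1 - p))
      = Real.sqrt (p * q) + Real.sqrt ((1 - p) * (1 - q)) := by
  obtain ⟨hp0, hp1⟩ := hp
  obtain ⟨hq0, hq1⟩ := hq
  have h1p : (0:ℝ) < 1 - p := by linarith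
  have h1q : (0:ℝ) < 1 - q := by linarith
  have hlog1 : Real.log ((1 - p) / (1 - q)) = Real.log (1 - p) - Real.log (1 - q) :=
    Real.log_div h1p.ne' h1q.ne'
  have hlog2 : Real.log (q * (1 - p) / (p * (1 - q)))
      = Real.log q + Real.log (1 - p) - (Real.log p + Real.log (1 - q)) := by
    rw [Real.log_div (by positivity) (by positivity), Real.log_mul hq0.ne' h1p.ne',
      Real.log_mul hp0.ne' h1q.ne']
  have e1 : Real.exp (-(1/2) * Real.log ((1 - p) / (1 - q)))
      = Real.sqrt (1 - q) / Real.sqrt (1 - p) := by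
    rw [hlog1, ← exp_half_log h1q, ← exp_half_log h1p, ← Real.exp_sub]
    ring_nf
  have e2 : Real.exp (Real.log (q * (1 - p) / (p * (1 - q))) / 2)
      = Real.sqrt q * Real.sqrt (1 - p) / (Real.sqrt p * Real.sqrt (1 - q)) := by
    rw [hlog2, ← exp_half_log hq0, ← exp_half_log h1p, ← exp_half_log hp0,
      ← exp_half_log h1q, ← Real.exp_add, ← Real.exp_add, ← Real.exp_sub]
    ring_nf
  rw [e1, e2, Real.sqrt_mul hp0.le, Real.sqrt_mul h1p.le]
  set sp := Real.sqrt p with hspdef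
  set sq' := Real.sqrt q with hsqdef
  set s1p := Real.sqrt (1 - p) with hs1pdef
  set s1q := Real.sqrt (1 - q) with hs1qdef
  have hsp : (0:ℝ) < sp := Real.sqrt_pos.2 hp0
  have hs1p : (0:ℝ) < s1p := Real.sqrt_pos.2 h1p
  have hs1q : (0:ℝ) < s1q := Real.sqrt_pos.2 h1q
  have e1p : 1 - p = s1p ^ 2 := (Real.sq_sqrt h1p.le).symm
  have ep : p = sp ^ 2 := (Real.sq_sqrt hp0.le).symm
  rw [e1p, ep]
  field_simp

/-- Integral of `g ∘ Y` for a Bernoulli-`p` variable `Y`. -/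
private lemma bern_int {Ω : Type*} [MeasurableSpace Ω] (μ : Measure Ω) [IsProbabilityMeasure μ]
    (Y : Ω → ℝ) (hY : Measurable Y) (p : ℝ) (hp0 : 0 ≤ p) (hp1 : p ≤ 1)
    (h1 : μ {a | Y a = 1} = ENNReal.ofReal p)
    (h0 : μ {a | Y a = 0} = ENNReal.ofReal (1 - p))
    (g : ℝ → ℝ) :
    Integrable (fun x => g (Y x)) μ ∧ ∫ x, g (Y x) ∂μ = p * g 1 + (1 - p) * g 0 := by
  set A : Set Ω := Y ⁻¹' {1} with hAdef
  set B : Set Ω := Y ⁻¹' {0} with hBdef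
  have hA : MeasurableSet A := hY (measurableSet_singleton 1)
  have hB : MeasurableSet B := hY (measurableSet_singleton 0)
  have hmuA : μ A = ENNReal.ofReal p := h1
  have hmuB : μ B = ENNReal.ofReal (1 - p) := h0
  have hdisj : Disjoint A B := by
    rw [Set.disjoint_left]
    intro x hx1 hx0
    have hx1' : Y x = 1 := hx1
    have hx0' : Y x = 0 := hx0
    rw [hx1'] at hx0'
    norm_num at hx0'
  have hunion : μ (A ∪ B) = 1 := by
    rw [measure_union hdisj hB, hmuA, hmuB, ← ENNReal.ofReal_add hp0 (by linarith)]
    norm_num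
  have hcompl : μ (A ∪ B)ᶜ = 0 := by
    rw [measure_compl (hA.union hB) (measure_ne_top μ _), hunion, measure_univ, tsub_self]
  have hae : ∀ᵐ x ∂μ, x ∈ A ∪ B := by
    rw [MeasureTheory.ae_iff]
    convert hcompl using 2
    rfl
  have hcongr : (fun x => g (Y x))
      =ᵐ[μ] fun x => A.indicator (fun _ => g 1) x + B.indicator (fun _ => g 0) x := by
    filter_upwards [hae] with x hx
    rcases hx with h | h
    · have hx1 : Y x = 1 := h
      have hxB : x ∉ B := by
        intro hB'; have : Y x = 0 := hB'; rw [hx1] at this; norm_num at this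
      simp [Set.indicator_of_mem h, Set.indicator_of_notMem hxB, hx1]
    · have hx0 : Y x = 0 := h
      have hxA : x ∉ A := by
        intro hA'; have : Y x = 1 := hA'; rw [hx0] at this; norm_num at this
      simp [Set.indicator_of_mem h, Set.indicator_of_notMem hxA, hx0]
  have hint1 : Integrable (fun x => A.indicator (fun _ => g 1) x) μ :=
    (integrable_const (g 1)).indicator hA
  have hint2 : Integrable (fun x => B.indicator (fun _ => g 0) x) μ :=
    (integrable_const (g 0)).indicator hB
  have hintSum : Integrable
      (fun x => A.indicator (fun _ => g 1) x + B.indicator (fun _ => g 0) x) μ :=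
    hint1.add hint2
  refine ⟨hintSum.congr hcongr.symm, ?_⟩
  rw [integral_congr_ae hcongr, integral_add hint1 hint2,
    integral_indicator_const _ hA, integral_indicator_const _ hB, measureReal_def, measureReal_def, hmuA, hmuB,
    ENNReal.toReal_ofReal hp0, ENNReal.toReal_ofReal (by linarith)]
  simp [mul_comm]

theorem bernoulli_loglik_tail_bound
    {Ω : Type*} [MeasurableSpace Ω] (μ : Measure Ω) [IsProbabilityMeasure μ]
    {J : Type*} [Fintype J]
    (P1 P2 : J → ℝ) (hP1 : ∀ ω, P1 ω ∈ Set.Ioo (0:ℝ) 1) (hP2 : ∀ ω, P2 ω ∈ Set.Ioo (0:ℝ) 1)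
    (X : J → Ω → ℝ) (hX : ∀ ω, Measurable (X ω))
    (hind : iIndepFun X μ)
    (hd1 : ∀ ω, μ {a | X ω a = 1} = ENNReal.ofReal (P1 ω))
    (hd0 : ∀ ω, μ {a | X ω a = 0} = ENNReal.ofReal (1 - P1 ω)) :
    (μ {a | ∑ ω, X ω a * Real.log (P2 ω * (1 - P1 ω) / (P1 ω * (1 - P2 ω)))
        > ∑ ω, Real.log ((1 - P1 ω) / (1 - P2 ω))}).toReal
      ≤ Real.exp
          (-(-2 * ∑ ω, Real.log (Real.sqrt (P1 ω * P2 ω)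
              + Real.sqrt ((1 - P1 ω) * (1 - P2 ω)))) / 2) := by
  classical
  set a : J → ℝ := fun ω => Real.log (P2 ω * (1 - P1 ω) / (P1 ω * (1 - P2 ω))) with ha
  set b : J → ℝ := fun ω => Real.log ((1 - P1 ω) / (1 - P2 ω)) with hb
  set Y : J → Ω → ℝ := fun ω x => X ω x * a ω with hY
  have hYmeas : ∀ ω, Measurable (Y ω) := fun ω => (hX ω).mul_const _
  have hindY : iIndepFun Y μ :=
    hind.comp (fun ω z => z * a ω) (fun ω => measurable_id.mul_const _)
  -- per-ω mgf computation
  have hkey : ∀ ω, Integrable (fun x => Real.exp ((1/2) * Y ω x)) μ ∧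
      ∫ x, Real.exp ((1/2) * Y ω x) ∂μ
        = P1 ω * Real.exp ((1/2) * (1 * a ω)) + (1 - P1 ω) * Real.exp ((1/2) * (0 * a ω)) := by
    intro ω
    exact bern_int μ (X ω) (hX ω) (P1 ω) (hP1 ω).1.le (hP1 ω).2.le (hd1 ω) (hd0 ω)
      (fun z => Real.exp ((1/2) * (z * a ω)))
  have hmgf : ∀ ω, mgf (Y ω) μ (1/2)
      = P1 ω * Real.exp ((1/2) * (1 * a ω)) + (1 - P1 ω) * Real.exp ((1/2) * (0 * a ω)) :=
    fun ω => (hkey ω).2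
  have hintS : Integrable (fun x => Real.exp ((1/2) * (∑ ω, Y ω) x)) μ :=
    hindY.integrable_exp_mul_sum hYmeas (fun i _ => (hkey i).1)
  have hcher := measure_ge_le_exp_mul_mgf (μ := μ) (X := ∑ ω, Y ω) (∑ ω, b ω)
    (by norm_num : (0:ℝ) ≤ 1/2) hintS
  have hsub : (μ {x | ∑ ω, X ω x * a ω > ∑ ω, b ω}).toReal
      ≤ (μ {x | ∑ ω, b ω ≤ (∑ ω, Y ω) x}).toReal := by
    apply ENNReal.toReal_mono (measure_ne_top μ _)
    apply measure_mono
    intro x hx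
    simpa [Y, Finset.sum_apply] using le_of_lt hx
  refine le_trans hsub (le_trans hcher ?_)
  -- compute the bound
  rw [hindY.mgf_sum hYmeas Finset.univ]
  have hprod : Real.exp (-(1/2) * ∑ ω, b ω) * ∏ ω, mgf (Y ω) μ (1/2)
      = ∏ ω, (Real.sqrt (P1 ω * P2 ω) + Real.sqrt ((1 - P1 ω) * (1 - P2 ω))) := by
    rw [show -(1/2 : ℝ) * ∑ ω, b ω = ∑ ω, (-(1/2) * b ω) by rw [Finset.mul_sum],
      Real.exp_sum, ← Finset.prod_mul_distrib]
    refine Finset.prod_congr rfl fun ω _ => ?_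
    rw [hmgf ω]
    have h0 : (1/2:ℝ) * (0 * a ω) = 0 := by ring
    have h1 : (1/2:ℝ) * (1 * a ω) = a ω / 2 := by ring
    rw [h0, h1, Real.exp_zero, mul_one]
    exact per_omega (hP1 ω) (hP2 ω)
  rw [hprod]
  have hRHS : Real.exp (-(-2 * ∑ ω, Real.log (Real.sqrt (P1 ω * P2 ω)
        + Real.sqrt ((1 - P1 ω) * (1 - P2 ω)))) / 2)
      = ∏ ω, (Real.sqrt (P1 ω * P2 ω) + Real.sqrt ((1 - P1 ω) * (1 - P2 ω))) := by
    rw [show (-(-2 * ∑ ω, Real.log (Real.sqrt (P1 ω * P2 ω)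
        + Real.sqrt ((1 - P1 ω) * (1 - P2 ω)))) / 2 : ℝ)
        = ∑ ω, Real.log (Real.sqrt (P1 ω * P2 ω)
            + Real.sqrt ((1 - P1 ω) * (1 - P2 ω))) by ring,
      Real.exp_sum]
    refine Finset.prod_congr rfl fun ω _ => ?_
    have hpos : 0 < Real.sqrt (P1 ω * P2 ω) + Real.sqrt ((1 - P1 ω) * (1 - P2 ω)) := by
      have := Real.sqrt_pos.2 (mul_pos (hP1 ω).1 (hP2 ω).1)
      positivity
    exact Real.exp_log hpos
  rw [hRHS]
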